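/- For λ > 0, 2λ ∫₀^1 r e^{-λπ r²} dr + 2λ ∫₁^∞ (1/r) e^{-πλ r²} dr = (1/π)(1 - e^{-λπ}) - λ Ei(-λπ), where Ei is the exponential integral. Consequently the average received power density in the SAN equals (2 G_m λ₂ P_tc / tan²(t_m/2)) · [1 - e^{-λ₂π} - λ₂π Ei(-λ₂π)] up to the stated normalization. -/

import Mathlib

open MeasureTheory Real Set

/-- The exponential integral `Ei x = -∫_{-x}^∞ e^{-t}/t dt`. -/
noncomputable def Ei (x : ℝ) : ℝ := -∫ t in Set.Ioi (-x), Real.exp (-t) / t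

lemma aux1 (c : ℝ) (hc : 0 < c) :
    (∫ r in Set.Ioc (0:ℝ) 1, r * Real.exp (-(c * r ^ 2)))
      = (1 - Real.exp (-c)) / (2 * c) := by
  rw [← intervalIntegral.integral_of_le (by norm_num : (0:ℝ) ≤ 1)]
  have h : ∀ x ∈ Set.uIcc (0:ℝ) 1, HasDerivAt (fun r => -Real.exp (-(c * r ^ 2)) / (2 * c))
      (x * Real.exp (-(c * x ^ 2))) x := by
    intro x _
    have h1 : HasDerivAt (fun r : ℝ => -(c * r ^ 2)) (-(c * (2 * x))) x := by
      have := (hasDerivAt_pow 2 x).const_mul c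
      simpa using this.fun_neg
    have h2 := (h1.exp).div_const (2 * c)
    have h3 := h2.fun_neg
    have he : -(Real.exp (-(c * x ^ 2)) * -(c * (2 * x)) / (2 * c)) = x * Real.exp (-(c * x ^ 2)) := by
      field_simp
    rw [he] at h3
    simpa [neg_div] using h3
  have hcont : IntervalIntegrable (fun x => x * Real.exp (-(c * x ^ 2))) volume 0 1 :=
    (Continuous.mul continuous_id (by continuity)).intervalIntegrable 0 1
  rw [intervalIntegral.integral_eq_sub_of_hasDerivAt h hcont]
  simp
  field_simp
  ring

lemma aux2 (c : ℝ) (hc : 0 < c) :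
    (∫ r in Set.Ioi (1:ℝ), r⁻¹ * Real.exp (-(c * r ^ 2)))
      = (1/2) * ∫ t in Set.Ioi c, Real.exp (-t) / t := by
  have hmeas : Measurable (fun t : ℝ => Real.exp (-t) / t * (1/2)) :=
    ((measurable_neg.exp).div measurable_id).mul_const _
  have hg1 : IntegrableOn (fun t : ℝ => Real.exp (-t) / t * (1/2)) (Set.Ici c) := by
    rw [integrableOn_Ici_iff_integrableOn_Ioi]
    apply Integrable.mono (g := fun t => Real.exp (-t) / c * (1/2))
    · exact (((exp_neg_integrableOn_Ioi c one_pos).congr_fun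
        (fun x _ => by norm_num) measurableSet_Ioi).div_const c).mul_const (1/2)
    · exact hmeas.aestronglyMeasurable
    · filter_upwards [ae_restrict_mem measurableSet_Ioi] with t ht
      have htc : c ≤ t := le_of_lt ht
      have ht0 : 0 < t := lt_of_lt_of_le hc htc
      rw [Real.norm_eq_abs, Real.norm_eq_abs, abs_of_nonneg, abs_of_nonneg]
      · gcongr
      · positivity
      · positivity
  have hg2 : IntegrableOn (fun x : ℝ => Real.exp (-(c * x ^ 2)) / (c * x ^ 2) * (1/2) * (c * (2 * x))) (Set.Ici 1) := by
    rw [integrableOn_Ici_iff_integrableOn_Ioi]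
    apply Integrable.mono (g := fun x => Real.exp (-(c * x)))
    · exact (exp_neg_integrableOn_Ioi 1 hc).congr_fun (fun x _ => by ring_nf) measurableSet_Ioi
    · exact (((measurable_neg.comp ((measurable_id.pow_const 2).const_mul c)).exp.div
        ((measurable_id.pow_const 2).const_mul c)).mul_const _ |>.mul
        ((measurable_id.const_mul 2).const_mul c)).aestronglyMeasurable
    · filter_upwards [ae_restrict_mem measurableSet_Ioi] with x hx
      have hx1 : (1:ℝ) < x := hx
      have hx0 : 0 < x := lt_trans one_pos hx1
      have heq : Real.exp (-(c * x ^ 2)) / (c * x ^ 2) * (1/2) * (c * (2 * x))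
          = Real.exp (-(c * x ^ 2)) / x := by
        field_simp
      rw [heq, Real.norm_eq_abs, Real.norm_eq_abs, abs_of_nonneg (by positivity),
        abs_of_nonneg (Real.exp_pos _).le]
      calc Real.exp (-(c * x ^ 2)) / x ≤ Real.exp (-(c * x ^ 2)) / 1 := by gcongr
        _ = Real.exp (-(c * x ^ 2)) := div_one _
        _ ≤ Real.exp (-(c * x)) := by
            apply Real.exp_le_exp.mpr
            nlinarith [mul_pos (mul_pos hc hx0) (sub_pos.mpr hx1)]
  have key : (∫ x in Set.Ioi (1:ℝ), ((fun t => Real.exp (-t) / t * (1/2)) ∘ (fun r => c * r ^ 2)) x * (c * (2 * x)))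
      = ∫ t in Set.Ioi (c * 1 ^ 2), Real.exp (-t) / t * (1/2) := by
    apply MeasureTheory.integral_comp_mul_deriv_Ioi
    · exact (continuous_const.mul (continuous_pow 2)).continuousOn
    · exact (Filter.tendsto_pow_atTop (two_ne_zero)).const_mul_atTop hc
    · intro x hx
      have : HasDerivAt (fun r : ℝ => c * r ^ 2) (c * (2 * x)) x := by
        simpa using (hasDerivAt_pow 2 x).const_mul c
      exact this.hasDerivWithinAt
    · apply ContinuousOn.mono (s := Set.Ioi 0)
      · exact ((continuous_neg.rexp.continuousOn).div continuous_id.continuousOn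
          (fun t ht => ne_of_gt ht)).mul continuousOn_const
      · rintro _ ⟨x, hx, rfl⟩
        exact mul_pos hc (pow_pos (lt_trans one_pos hx) 2)
    · apply hg1.mono_set
      rintro _ ⟨x, hx, rfl⟩
      have : (1:ℝ) ≤ x := hx
      calc c = c * 1 ^ 2 := by ring
        _ ≤ c * x ^ 2 := by nlinarith [mul_nonneg hc.le (mul_nonneg (sub_nonneg.mpr this) (by linarith : (0:ℝ) ≤ x + 1))]
    · exact hg2
  have lhs_eq : (∫ r in Set.Ioi (1:ℝ), r⁻¹ * Real.exp (-(c * r ^ 2)))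
      = ∫ x in Set.Ioi (1:ℝ), ((fun t => Real.exp (-t) / t * (1/2)) ∘ (fun r => c * r ^ 2)) x * (c * (2 * x)) := by
    apply setIntegral_congr_fun measurableSet_Ioi
    intro x hx
    have hx0 : (0:ℝ) < x := lt_trans one_pos hx
    simp only [Function.comp]
    field_simp
  rw [lhs_eq, key]
  rw [show c * 1 ^ 2 = c by ring, integral_mul_const]
  ring

/-- The average received charging power density computation of Proposition 2:
`2λ∫₀^1 r e^{-λπr²} dr + 2λ∫₁^∞ (1/r) e^{-πλr²} dr = (1/π)(1 - e^{-λπ}) - λ Ei(-λπ)`,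
and consequently the density `(2 G_m λ₂ P_tc / tan²(t_m/2))·[1 - e^{-λ₂π} - λ₂π Ei(-λ₂π)]`
equals the integral expression up to the stated normalization. -/
theorem stmt_12 (lam Gm Ptc tm : ℝ) (hlam : 0 < lam) (hGm : 0 < Gm) (hP : 0 < Ptc)
    (htm : Real.tan (tm / 2) ≠ 0) :
    (2 * lam * ∫ r in Set.Ioc (0 : ℝ) 1, r * Real.exp (-(lam * π * r ^ 2)))
        + 2 * lam * (∫ r in Set.Ioi (1 : ℝ), r⁻¹ * Real.exp (-(π * lam * r ^ 2)))
      = (1 / π) * (1 - Real.exp (-(lam * π))) - lam * Ei (-(lam * π)) ∧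
    2 * Gm * lam * Ptc / Real.tan (tm / 2) ^ 2 *
        (1 - Real.exp (-(lam * π)) - lam * π * Ei (-(lam * π)))
      = 2 * Gm * lam * Ptc * π / Real.tan (tm / 2) ^ 2 *
        ((2 * lam * ∫ r in Set.Ioc (0 : ℝ) 1, r * Real.exp (-(lam * π * r ^ 2)))
          + 2 * lam * ∫ r in Set.Ioi (1 : ℝ), r⁻¹ * Real.exp (-(π * lam * r ^ 2))) := by
  have hpi := Real.pi_pos
  have h1 : (2 * lam * ∫ r in Set.Ioc (0 : ℝ) 1, r * Real.exp (-(lam * π * r ^ 2)))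
        + 2 * lam * (∫ r in Set.Ioi (1 : ℝ), r⁻¹ * Real.exp (-(π * lam * r ^ 2)))
      = (1 / π) * (1 - Real.exp (-(lam * π))) - lam * Ei (-(lam * π)) := by
    rw [aux1 (lam * π) (by positivity), aux2 (π * lam) (by positivity)]
    have hE : Ei (-(lam * π)) = -∫ t in Set.Ioi (lam * π), Real.exp (-t) / t := by
      rw [Ei, neg_neg]
    rw [hE, show π * lam = lam * π by ring]
    field_simp
    ring
  refine ⟨h1, ?_⟩
  rw [h1]
  field_simp
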